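/- For all integers 1 ≤ k ≤ n, the function λ ↦ cot(𝒬_{k,n}(λ)) is concave on Γ: for all λ, μ ∈ Γ and s ∈ [0,1], cot(𝒬_{k,n}(s λ + (1−s) μ)) ≥ s · cot(𝒬_{k,n}(λ)) + (1−s) · cot(𝒬_{k,n}(μ)). (Note that for λ ∈ Γ one has 𝒬_{k,n}(λ) ∈ (0, π), so the cotangent is defined.) -/

import Mathlib

open Real

/-- `arccot x = π/2 - arctan x`, a strictly decreasing bijection from `ℝ` onto `(0, π)`. -/
noncomputable def arccot (x : ℝ) : ℝ := π / 2 - Real.arctan x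

/-- `𝒬_{k,n}(λ)`: the maximum over subsets `J ⊆ {1,…,n}` with `|J| = k` of
`∑_{j ∈ J} arccot (λ j)`. -/
noncomputable def Qfun (n k : ℕ) (lam : Fin n → ℝ) : ℝ :=
  sSup {x : ℝ | ∃ s : Finset (Fin n), s.card = k ∧ x = ∑ i ∈ s, arccot (lam i)}

lemma arccot_pos' (x : ℝ) : 0 < arccot x := by
  have := Real.arctan_lt_pi_div_two x
  unfold arccot; linarith

lemma arccot_lt_pi' (x : ℝ) : arccot x < π := by
  have := Real.neg_pi_div_two_lt_arctan x
  unfold arccot; linarith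

lemma cot_arccot' (x : ℝ) : Real.cot (arccot x) = x := by
  unfold arccot
  rw [Real.cot_eq_cos_div_sin, Real.cos_pi_div_two_sub, Real.sin_pi_div_two_sub,
    ← Real.tan_eq_sin_div_cos, Real.tan_arctan]

lemma cot_le_cot' (a b : ℝ) (ha : 0 < a) (hab : a ≤ b) (hb : b < π) :
    Real.cot b ≤ Real.cot a := by
  have hsa : 0 < Real.sin a := Real.sin_pos_of_pos_of_lt_pi ha (lt_of_le_of_lt hab hb)
  have hsb : 0 < Real.sin b := Real.sin_pos_of_pos_of_lt_pi (lt_of_lt_of_le ha hab) hb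
  have hs : 0 ≤ Real.sin (b - a) :=
    Real.sin_nonneg_of_nonneg_of_le_pi (by linarith) (by linarith [le_of_lt hb])
  rw [Real.sin_sub] at hs
  rw [Real.cot_eq_cos_div_sin, Real.cot_eq_cos_div_sin, div_le_div_iff₀ hsb hsa]
  nlinarith

lemma cot_lt_cot' (a b : ℝ) (ha : 0 < a) (hab : a < b) (hb : b < π) :
    Real.cot b < Real.cot a := by
  have hsa : 0 < Real.sin a := Real.sin_pos_of_pos_of_lt_pi ha (lt_trans hab hb)
  have hsb : 0 < Real.sin b := Real.sin_pos_of_pos_of_lt_pi (lt_trans ha hab) hb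
  have hs : 0 < Real.sin (b - a) :=
    Real.sin_pos_of_pos_of_lt_pi (by linarith) (by linarith)
  rw [Real.sin_sub] at hs
  rw [Real.cot_eq_cos_div_sin, Real.cot_eq_cos_div_sin, div_lt_div_iff₀ hsb hsa]
  nlinarith

/-- For `A ∈ (0,π)`, `A + arccot y < π ↔ 0 < cot A + y`. -/
lemma cond_iff' (A y : ℝ) (hA0 : 0 < A) (hAπ : A < π) :
    A + arccot y < π ↔ 0 < Real.cot A + y := by
  have hcotpi : Real.cot (π - A) = - Real.cot A := by
    rw [Real.cot_eq_cos_div_sin, Real.cot_eq_cos_div_sin, Real.cos_pi_sub, Real.sin_pi_sub,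
      neg_div]
  constructor
  · intro h
    have h2 : arccot y < π - A := by linarith
    have := cot_lt_cot' (arccot y) (π - A) (arccot_pos' y) h2 (by linarith)
    rw [hcotpi, cot_arccot'] at this
    linarith
  · intro h
    by_contra hc
    push_neg at hc
    have h2 : π - A ≤ arccot y := by linarith
    have := cot_le_cot' (π - A) (arccot y) (by linarith) h2 (arccot_lt_pi' y)
    rw [hcotpi, cot_arccot'] at this
    linarith

lemma cot_add'' (A B : ℝ) (hA : 0 < A) (hB : 0 < B) (hS : A + B < π) :
    Real.cot (A + B) = (Real.cot A * Real.cot B - 1) / (Real.cot A + Real.cot B) := by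
  have hsA : 0 < Real.sin A := Real.sin_pos_of_pos_of_lt_pi hA (by linarith)
  have hsB : 0 < Real.sin B := Real.sin_pos_of_pos_of_lt_pi hB (by linarith)
  have hsS : 0 < Real.sin (A + B) := Real.sin_pos_of_pos_of_lt_pi (by linarith) hS
  have hden : Real.cot A + Real.cot B = Real.sin (A + B) / (Real.sin A * Real.sin B) := by
    rw [Real.cot_eq_cos_div_sin, Real.cot_eq_cos_div_sin, Real.sin_add]
    field_simp
    ring
  rw [Real.cot_eq_cos_div_sin (A + B), hden, Real.cot_eq_cos_div_sin A,
    Real.cot_eq_cos_div_sin B, Real.cos_add, Real.sin_add]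
  field_simp

lemma alg_mono' (x x' y : ℝ) (h : x ≤ x') (hxy : 0 < x + y) :
    (x * y - 1) / (x + y) ≤ (x' * y - 1) / (x' + y) := by
  have h2 : 0 < x' + y := by linarith
  rw [div_le_div_iff₀ hxy h2]
  nlinarith [mul_nonneg (sub_nonneg.2 h) (add_nonneg (sq_nonneg y) zero_le_one)]

lemma comb_pos' (s p q : ℝ) (hs0 : 0 ≤ s) (hs1 : s ≤ 1) (hp : 0 < p) (hq : 0 < q) :
    0 < s * p + (1 - s) * q := by
  rcases eq_or_lt_of_le hs0 with h | h
  · simp [← h]; linarith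
  · have : 0 ≤ (1 - s) * q := mul_nonneg (by linarith) hq.le
    nlinarith

lemma alg_concave' (s x1 y1 x2 y2 : ℝ) (hs0 : 0 ≤ s) (hs1 : s ≤ 1)
    (h1 : 0 < x1 + y1) (h2 : 0 < x2 + y2) :
    s * ((x1 * y1 - 1) / (x1 + y1)) + (1 - s) * ((x2 * y2 - 1) / (x2 + y2)) ≤
      ((s * x1 + (1 - s) * x2) * (s * y1 + (1 - s) * y2) - 1) /
        ((s * x1 + (1 - s) * x2) + (s * y1 + (1 - s) * y2)) := by
  have hU : 0 < (s * x1 + (1 - s) * x2) + (s * y1 + (1 - s) * y2) := by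
    have := comb_pos' s (x1 + y1) (x2 + y2) hs0 hs1 h1 h2
    linarith
  rw [← sub_nonneg]
  have expand : ((s * x1 + (1 - s) * x2) * (s * y1 + (1 - s) * y2) - 1) /
        ((s * x1 + (1 - s) * x2) + (s * y1 + (1 - s) * y2)) -
      (s * ((x1 * y1 - 1) / (x1 + y1)) + (1 - s) * ((x2 * y2 - 1) / (x2 + y2))) =
      (s * (1 - s) * (((x1 - y1) * (x2 + y2) - (x2 - y2) * (x1 + y1)) ^ 2 +
        4 * ((x1 + y1) - (x2 + y2)) ^ 2)) /
      (4 * (x1 + y1) * (x2 + y2) * ((s * x1 + (1 - s) * x2) + (s * y1 + (1 - s) * y2))) := by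
    field_simp
    ring
  rw [expand]
  have hnum : 0 ≤ s * (1 - s) * (((x1 - y1) * (x2 + y2) - (x2 - y2) * (x1 + y1)) ^ 2 +
      4 * ((x1 + y1) - (x2 + y2)) ^ 2) :=
    mul_nonneg (mul_nonneg hs0 (by linarith)) (by positivity)
  positivity

lemma key_concave {ι : Type*} [DecidableEq ι] (s : ℝ) (hs0 : 0 ≤ s) (hs1 : s ≤ 1)
    (lam mu : ι → ℝ) (J : Finset ι) :
    (∑ i ∈ J, arccot (lam i)) < π → (∑ i ∈ J, arccot (mu i)) < π →
    (∑ i ∈ J, arccot (s * lam i + (1 - s) * mu i)) < π ∧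
      s * Real.cot (∑ i ∈ J, arccot (lam i)) + (1 - s) * Real.cot (∑ i ∈ J, arccot (mu i)) ≤
        Real.cot (∑ i ∈ J, arccot (s * lam i + (1 - s) * mu i)) := by
  induction J using Finset.induction_on with
  | empty =>
    intro _ _
    simp [Real.cot_eq_cos_div_sin, Real.pi_pos]
  | insert _ _ ha =>
    rename_i a J' IH
    intro h1 h2
    rw [Finset.sum_insert ha] at h1 h2 ⊢
    rw [Finset.sum_insert ha, Finset.sum_insert ha]
    have hbl := arccot_pos' (lam a); have hbm := arccot_pos' (mu a)
    have hbn := arccot_pos' (s * lam a + (1 - s) * mu a)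
    have hbn' := arccot_lt_pi' (s * lam a + (1 - s) * mu a)
    have hAl : (∑ i ∈ J', arccot (lam i)) < π := by linarith
    have hAm : (∑ i ∈ J', arccot (mu i)) < π := by linarith
    obtain ⟨hAn, hcot⟩ := IH hAl hAm
    rcases J'.eq_empty_or_nonempty with rfl | hne
    · simp only [Finset.sum_empty, add_zero]
      refine ⟨hbn', ?_⟩
      rw [cot_arccot', cot_arccot', cot_arccot']
    · have hpos : ∀ f : ι → ℝ, 0 < ∑ i ∈ J', arccot (f i) := fun f =>
        Finset.sum_pos (fun i _ => arccot_pos' (f i)) hne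
      set Al := ∑ i ∈ J', arccot (lam i) with hAldef
      set Am := ∑ i ∈ J', arccot (mu i) with hAmdef
      set An := ∑ i ∈ J', arccot (s * lam i + (1 - s) * mu i) with hAndef
      have hAl0 : 0 < Al := hpos lam
      have hAm0 : 0 < Am := hpos mu
      have hAn0 : 0 < An := hpos _
      have hxl : 0 < Real.cot Al + lam a :=
        (cond_iff' Al (lam a) hAl0 hAl).mp (by linarith)
      have hxm : 0 < Real.cot Am + mu a :=
        (cond_iff' Am (mu a) hAm0 hAm).mp (by linarith)
      have hcomb : 0 < (s * Real.cot Al + (1 - s) * Real.cot Am) +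
          (s * lam a + (1 - s) * mu a) := by
        have := comb_pos' s (Real.cot Al + lam a) (Real.cot Am + mu a) hs0 hs1 hxl hxm
        linarith
      have hxn : 0 < Real.cot An + (s * lam a + (1 - s) * mu a) := by linarith
      have hsumn : An + arccot (s * lam a + (1 - s) * mu a) < π :=
        (cond_iff' An _ hAn0 hAn).mpr hxn
      refine ⟨by linarith, ?_⟩
      rw [cot_add'' (arccot (lam a)) Al hbl hAl0 (by linarith),
          cot_add'' (arccot (mu a)) Am hbm hAm0 (by linarith),
          cot_add'' (arccot _) An hbn hAn0 (by linarith), cot_arccot', cot_arccot', cot_arccot']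
      have step1 := alg_concave' s (Real.cot Al) (lam a) (Real.cot Am) (mu a) hs0 hs1
        (by linarith) (by linarith)
      have step2 := alg_mono' (s * Real.cot Al + (1 - s) * Real.cot Am) (Real.cot An)
        (s * lam a + (1 - s) * mu a) hcot hcomb
      calc s * ((lam a * Real.cot Al - 1) / (lam a + Real.cot Al)) +
            (1 - s) * ((mu a * Real.cot Am - 1) / (mu a + Real.cot Am))
          = s * ((Real.cot Al * lam a - 1) / (Real.cot Al + lam a)) +
            (1 - s) * ((Real.cot Am * mu a - 1) / (Real.cot Am + mu a)) := by ring_nf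
        _ ≤ ((s * Real.cot Al + (1 - s) * Real.cot Am) * (s * lam a + (1 - s) * mu a) - 1) /
            ((s * Real.cot Al + (1 - s) * Real.cot Am) + (s * lam a + (1 - s) * mu a)) := step1
        _ ≤ (Real.cot An * (s * lam a + (1 - s) * mu a) - 1) /
            (Real.cot An + (s * lam a + (1 - s) * mu a)) := step2
        _ = ((s * lam a + (1 - s) * mu a) * Real.cot An - 1) /
            ((s * lam a + (1 - s) * mu a) + Real.cot An) := by ring_nf

lemma Qfun_spec (n k : ℕ) (hkn : k ≤ n) (lam : Fin n → ℝ) :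
    (∃ J : Finset (Fin n), J.card = k ∧ Qfun n k lam = ∑ i ∈ J, arccot (lam i)) ∧
    (∀ J : Finset (Fin n), J.card = k → ∑ i ∈ J, arccot (lam i) ≤ Qfun n k lam) := by
  classical
  set F : Finset ℝ := (Finset.univ.powersetCard k).image (fun J => ∑ i ∈ J, arccot (lam i))
    with hF
  have hset : {x : ℝ | ∃ s : Finset (Fin n), s.card = k ∧ x = ∑ i ∈ s, arccot (lam i)} = ↑F := by
    ext x
    simp only [hF, Set.mem_setOf_eq, Finset.coe_image, Set.mem_image, Finset.mem_coe,
      Finset.mem_powersetCard_univ]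
    constructor
    · rintro ⟨J, hJ, rfl⟩; exact ⟨J, hJ, rfl⟩
    · rintro ⟨J, hJ, rfl⟩; exact ⟨J, hJ, rfl⟩
  have hne : F.Nonempty := by
    apply Finset.Nonempty.image
    rw [Finset.powersetCard_nonempty]
    simpa using hkn
  have hQ : Qfun n k lam = F.max' hne := by
    rw [Qfun, hset, hne.csSup_eq_max']
  constructor
  · obtain ⟨J, hJ, hval⟩ := Finset.mem_image.mp (F.max'_mem hne)
    rw [Finset.mem_powersetCard_univ] at hJ
    exact ⟨J, hJ, by rw [hQ, hval]⟩
  · intro J hJ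
    rw [hQ]
    exact F.le_max' _ (Finset.mem_image.mpr ⟨J, Finset.mem_powersetCard_univ.mpr hJ, rfl⟩)

theorem cot_Qfun_concave (n k : ℕ) (hk : 1 ≤ k) (hkn : k ≤ n)
    (lam mu : Fin n → ℝ)
    (hlam : (∑ i, arccot (lam i)) < π) (hmu : (∑ i, arccot (mu i)) < π)
    (s : ℝ) (hs0 : 0 ≤ s) (hs1 : s ≤ 1) :
    s * Real.cot (Qfun n k lam) + (1 - s) * Real.cot (Qfun n k mu) ≤
      Real.cot (Qfun n k (s • lam + (1 - s) • mu)) := by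
  classical
  set nu : Fin n → ℝ := s • lam + (1 - s) • mu with hnu
  have hnui : ∀ i, nu i = s * lam i + (1 - s) * mu i := by
    intro i; simp [hnu]
  -- sums over any subset are below the total sum
  have hsub : ∀ (f : Fin n → ℝ) (J : Finset (Fin n)),
      (∑ i ∈ J, arccot (f i)) ≤ ∑ i, arccot (f i) := fun f J =>
    Finset.sum_le_sum_of_subset_of_nonneg (Finset.subset_univ J)
      (fun i _ _ => (arccot_pos' (f i)).le)
  have hposJ : ∀ (f : Fin n → ℝ) (J : Finset (Fin n)), J.card = k →
      0 < ∑ i ∈ J, arccot (f i) := by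
    intro f J hJ
    have : J.Nonempty := Finset.card_pos.mp (by omega)
    exact Finset.sum_pos (fun i _ => arccot_pos' (f i)) this
  obtain ⟨⟨Jn, hJnc, hQn⟩, hlen⟩ := Qfun_spec n k hkn nu
  obtain ⟨⟨Jl, hJlc, hQl⟩, hlel⟩ := Qfun_spec n k hkn lam
  obtain ⟨⟨Jm, hJmc, hQm⟩, hlem⟩ := Qfun_spec n k hkn mu
  -- concavity along the maximizing subset for nu
  have hsum_nu : (∑ i ∈ Jn, arccot (nu i)) = ∑ i ∈ Jn, arccot (s * lam i + (1 - s) * mu i) :=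
    Finset.sum_congr rfl (fun i _ => by rw [hnui i])
  obtain ⟨-, hkey⟩ := key_concave s hs0 hs1 lam mu Jn
    (lt_of_le_of_lt (hsub lam Jn) hlam) (lt_of_le_of_lt (hsub mu Jn) hmu)
  -- cot (Qfun lam) ≤ cot (∑_{Jn} arccot lam)
  have hcl : Real.cot (Qfun n k lam) ≤ Real.cot (∑ i ∈ Jn, arccot (lam i)) := by
    rw [hQl]
    exact cot_le_cot' _ _ (hposJ lam Jn hJnc) (hQl ▸ hlel Jn hJnc)
      (lt_of_le_of_lt (hsub lam Jl) hlam)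
  have hcm : Real.cot (Qfun n k mu) ≤ Real.cot (∑ i ∈ Jn, arccot (mu i)) := by
    rw [hQm]
    exact cot_le_cot' _ _ (hposJ mu Jn hJnc) (hQm ▸ hlem Jn hJnc)
      (lt_of_le_of_lt (hsub mu Jm) hmu)
  have h1 : s * Real.cot (Qfun n k lam) ≤ s * Real.cot (∑ i ∈ Jn, arccot (lam i)) :=
    mul_le_mul_of_nonneg_left hcl hs0
  have h2 : (1 - s) * Real.cot (Qfun n k mu) ≤
      (1 - s) * Real.cot (∑ i ∈ Jn, arccot (mu i)) :=
    mul_le_mul_of_nonneg_left hcm (by linarith)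
  rw [hQn, hsum_nu]
  linarith
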